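/- Let θ ∈ (0,1), ξ ∈ (0,1), and define a_0 ∈ (0,1) with a_{k+1} = a_k − ξ·a_k^{1/θ}. Assuming 0 < a_k < 1 for all k, the sequence satisfies a_k ≤ (1 + ((1−θ)/θ)·ξ·k)^{−θ/(1−θ)} for all k ≥ 0. -/

import Mathlib

/-- Bernoulli-type inequality with negative exponent: for `0 < t < 1` and `0 < p`,
`1 + p * t ≤ (1 - t) ^ (-p)`. -/
lemma bernoulli_neg_exp {t p : ℝ} (ht0 : 0 < t) (ht1 : t < 1) (hp : 0 < p) :
    1 + p * t ≤ (1 - t) ^ (-p) := by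
  have h1t : 0 < 1 - t := by linarith
  rcases le_or_gt 1 p with hp1 | hp1
  · -- use Bernoulli with exponent p ≥ 1 on 1 + s, s = t/(1-t)
    set s := t / (1 - t) with hs_def
    have hs0 : 0 ≤ s := div_nonneg ht0.le h1t.le
    have hts : t ≤ s := by
      rw [hs_def, le_div_iff₀ h1t]; nlinarith
    have h1s : 1 + s = (1 - t)⁻¹ := by
      rw [hs_def]; field_simp; ring
    have hb := one_add_mul_self_le_rpow_one_add (s := s) (by linarith) hp1
    calc 1 + p * t ≤ 1 + p * s := by nlinarith
      _ ≤ (1 + s) ^ p := hb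
      _ = ((1 - t)⁻¹) ^ p := by rw [h1s]
      _ = (1 - t) ^ (-p) := by
          rw [Real.inv_rpow h1t.le, ← Real.rpow_neg h1t.le]
  · -- p < 1 : use (1-t)^p ≤ 1 - p t
    have hb : (1 - t) ^ p ≤ 1 - p * t := by
      have := rpow_one_add_le_one_add_mul_self (s := -t) (by linarith) hp.le hp1.le
      have h : (1 : ℝ) + -t = 1 - t := by ring
      rw [h] at this
      linarith [this]
    have hpos : 0 < (1 - t) ^ p := Real.rpow_pos_of_pos h1t p
    rw [Real.rpow_neg h1t.le, ← one_div, le_div_iff₀ hpos]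
    have h1pt : 0 < 1 + p * t := by positivity
    nlinarith [mul_le_mul_of_nonneg_left hb h1pt.le, sq_nonneg (p * t)]

theorem sublinear_recursion_rate (θ ξ : ℝ) (hθ : θ ∈ Set.Ioo (0 : ℝ) 1)
    (hξ : ξ ∈ Set.Ioo (0 : ℝ) 1) (a : ℕ → ℝ)
    (ha0 : a 0 ∈ Set.Ioo (0 : ℝ) 1)
    (harec : ∀ k, a (k + 1) = a k - ξ * a k ^ (1 / θ))
    (hak : ∀ k, a k ∈ Set.Ioo (0 : ℝ) 1) :
    ∀ k : ℕ, a k ≤ (1 + (1 - θ) / θ * ξ * k) ^ (-(θ / (1 - θ))) := by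
  obtain ⟨hθ0, hθ1⟩ := hθ
  obtain ⟨hξ0, hξ1⟩ := hξ
  set p : ℝ := (1 - θ) / θ with hp_def
  have hp : 0 < p := div_pos (by linarith) hθ0
  -- key inductive estimate on a k ^ (-p)
  have key : ∀ k : ℕ, 1 + p * ξ * k ≤ (a k) ^ (-p) := by
    intro k
    induction k with
    | zero =>
      simp only [Nat.cast_zero, mul_zero, add_zero]
      have := Real.one_lt_rpow_iff_of_pos (ha0.1) (y := -p)
      have h1 : 1 < a 0 ^ (-p) := this.mpr (Or.inr ⟨ha0.2, by linarith⟩)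
      linarith
    | succ k ih =>
      have hak0 := (hak k).1
      have hak1' := (hak (k + 1)).1
      have h1p : 1 / θ = 1 + p := by rw [hp_def]; field_simp; ring
      have hrw : a (k + 1) = a k * (1 - ξ * a k ^ p) := by
        rw [harec, h1p, Real.rpow_add hak0, Real.rpow_one]; ring
      set t : ℝ := ξ * a k ^ p with ht_def
      have ht0 : 0 < t := mul_pos hξ0 (Real.rpow_pos_of_pos hak0 p)
      have ht1 : t < 1 := by
        by_contra h
        push_neg at h
        rw [hrw] at hak1'
        nlinarith
      have hmul : a k ^ p * a k ^ (-p) = 1 := by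
        rw [← Real.rpow_add hak0]; simp
      have hsplit : a (k + 1) ^ (-p) = a k ^ (-p) * (1 - t) ^ (-p) := by
        rw [hrw, Real.mul_rpow hak0.le (by linarith)]
      have hbern := bernoulli_neg_exp ht0 ht1 hp
      have hanneg : 0 ≤ a k ^ (-p) := (Real.rpow_pos_of_pos hak0 _).le
      calc 1 + p * ξ * (k + 1 : ℕ) = (1 + p * ξ * k) + p * ξ := by push_cast; ring
        _ ≤ a k ^ (-p) + p * ξ := by linarith
        _ = a k ^ (-p) * (1 + p * t) := by
            rw [ht_def]; linear_combination p * ξ * hmul.symm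
        _ ≤ a k ^ (-p) * (1 - t) ^ (-p) := mul_le_mul_of_nonneg_left hbern hanneg
        _ = a (k + 1) ^ (-p) := hsplit.symm
  -- conclude
  intro k
  have hak0 := (hak k).1
  have hb0 : (0 : ℝ) < 1 + p * ξ * k := by positivity
  have hkey := key k
  have hexp : -(θ / (1 - θ)) = -p⁻¹ := by
    rw [hp_def, inv_div]
  have hmono := Real.rpow_le_rpow_of_nonpos hb0 hkey
    (z := -p⁻¹) (neg_nonpos.mpr (inv_nonneg.mpr hp.le))
  have hid : (a k ^ (-p)) ^ (-p⁻¹) = a k := by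
    rw [← Real.rpow_mul hak0.le, show (-p) * (-p⁻¹) = p * p⁻¹ by ring,
      mul_inv_cancel₀ hp.ne', Real.rpow_one]
  calc a k = (a k ^ (-p)) ^ (-p⁻¹) := hid.symm
    _ ≤ (1 + p * ξ * k) ^ (-p⁻¹) := hmono
    _ = (1 + (1 - θ) / θ * ξ * k) ^ (-(θ / (1 - θ))) := by rw [hexp, hp_def]
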